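/- Under hypotheses H(A), H(J), H(γ,f) and (H_s), Problems P_incl and P_opt are equivalent and have a unique common solution: there exists exactly one u ∈ V with 0 ∈ ∂₂ℒ(u,u), there exists exactly one u ∈ V solving P_incl, and these solutions coincide. -/

import Mathlib

open Filter Topology Set

/-- Clarke generalized directional derivative of `j` at `x` in direction `v`. -/
noncomputable def clarkeDeriv {Y : Type*} [NormedAddCommGroup Y] [NormedSpace ℝ Y]
    (j : Y → ℝ) (x v : Y) : ℝ :=
  Filter.limsup (fun p : Y × ℝ => (j (p.1 + p.2 • v) - j p.1) / p.2)
    ((nhds x) ×ˢ (nhdsWithin (0 : ℝ) (Set.Ioi (0 : ℝ))))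

/-- Clarke generalized subdifferential of `j` at `x`. -/
noncomputable def clarkeSubdiff {Y : Type*} [NormedAddCommGroup Y] [NormedSpace ℝ Y]
    (j : Y → ℝ) (x : Y) : Set (Y →L[ℝ] ℝ) :=
  {ξ : Y →L[ℝ] ℝ | ∀ v : Y, ξ v ≤ clarkeDeriv j x v}

namespace CS9

/-! ### Generic real limsup lemmas -/

section Limsup

variable {α : Type*} {l : Filter α} [l.NeBot] {f g : α → ℝ} {a : ℝ}

omit [l.NeBot] in
lemma ibu_le (h : ∀ᶠ x in l, f x ≤ a) : IsBoundedUnder (· ≤ ·) l f := ⟨a, eventually_map.2 h⟩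

omit [l.NeBot] in
lemma ibu_ge (h : ∀ᶠ x in l, a ≤ f x) : IsBoundedUnder (· ≥ ·) l f := ⟨a, eventually_map.2 h⟩

lemma real_tendsto_add_limsup (hf : Tendsto f l (𝓝 a))
    (hg1 : IsBoundedUnder (· ≤ ·) l g) (hg2 : IsBoundedUnder (· ≥ ·) l g) :
    limsup (fun x => f x + g x) l = a + limsup g l := by
  obtain ⟨b1, hb1⟩ := id hg1
  obtain ⟨b2, hb2⟩ := id hg2
  rw [eventually_map] at hb1 hb2
  have hsum_le : IsBoundedUnder (· ≤ ·) l (fun x => f x + g x) := by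
    refine ibu_le (?_ : ∀ᶠ x in l, f x + g x ≤ (a + 1) + b1)
    filter_upwards [hf.eventually (gt_mem_nhds (lt_add_one a)), hb1] with x h1 h2
    linarith
  have hsum_ge : IsBoundedUnder (· ≥ ·) l (fun x => f x + g x) := by
    refine ibu_ge (?_ : ∀ᶠ x in l, (a - 1) + b2 ≤ f x + g x)
    filter_upwards [hf.eventually (lt_mem_nhds (sub_one_lt a)), hb2] with x h1 h2
    linarith
  apply le_antisymm
  · refine le_of_forall_pos_le_add fun ε hε => ?_
    have e1 : ∀ᶠ x in l, f x < a + ε / 2 := hf.eventually (gt_mem_nhds (by linarith))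
    have e2 : ∀ᶠ x in l, g x < limsup g l + ε / 2 :=
      eventually_lt_of_limsup_lt (by linarith) hg1
    have : ∀ᶠ x in l, f x + g x ≤ a + limsup g l + ε := by
      filter_upwards [e1, e2] with x h1 h2; linarith
    exact (limsup_le_of_le hsum_ge.isCoboundedUnder_le this).trans (by linarith)
  · refine le_of_forall_pos_le_add fun ε hε => ?_
    have e1 : ∀ᶠ x in l, a - ε / 2 < f x := hf.eventually (lt_mem_nhds (by linarith))
    have e2 : ∃ᶠ x in l, limsup g l - ε / 2 < g x :=
      frequently_lt_of_lt_limsup hg2.isCoboundedUnder_le (by linarith)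
    have : ∃ᶠ x in l, a + limsup g l - ε ≤ f x + g x := by
      refine (e2.and_eventually e1).mono ?_
      rintro x ⟨h1, h2⟩; linarith
    have := le_limsup_of_frequently_le this hsum_le
    linarith

lemma real_limsup_add_le (hf1 : IsBoundedUnder (· ≤ ·) l f) (hf2 : IsBoundedUnder (· ≥ ·) l f)
    (hg1 : IsBoundedUnder (· ≤ ·) l g) (hg2 : IsBoundedUnder (· ≥ ·) l g) :
    limsup (fun x => f x + g x) l ≤ limsup f l + limsup g l := by
  obtain ⟨b2, hb2⟩ := id hf2
  obtain ⟨b2', hb2'⟩ := id hg2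
  rw [eventually_map] at hb2 hb2'
  have hco : IsCoboundedUnder (· ≤ ·) l (fun x => f x + g x) := by
    refine IsBoundedUnder.isCoboundedUnder_le (ibu_ge (?_ : ∀ᶠ x in l, b2 + b2' ≤ _))
    filter_upwards [hb2, hb2'] with x h1 h2; exact add_le_add h1 h2
  refine le_of_forall_pos_le_add fun ε hε => ?_
  have e1 : ∀ᶠ x in l, f x < limsup f l + ε / 2 := eventually_lt_of_limsup_lt (by linarith) hf1
  have e2 : ∀ᶠ x in l, g x < limsup g l + ε / 2 := eventually_lt_of_limsup_lt (by linarith) hg1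
  refine limsup_le_of_le hco ?_
  filter_upwards [e1, e2] with x h1 h2; linarith

lemma real_limsup_const_mul {c : ℝ} (hc : 0 < c)
    (hg1 : IsBoundedUnder (· ≤ ·) l g) (hg2 : IsBoundedUnder (· ≥ ·) l g) :
    limsup (fun x => c * g x) l = c * limsup g l := by
  have hcg1 : IsBoundedUnder (· ≤ ·) l (fun x => c * g x) := by
    obtain ⟨b, hb⟩ := id hg1; rw [eventually_map] at hb
    exact ibu_le ((hb.mono fun x hx => mul_le_mul_of_nonneg_left hx hc.le))
  have hcg2 : IsBoundedUnder (· ≥ ·) l (fun x => c * g x) := by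
    obtain ⟨b, hb⟩ := id hg2; rw [eventually_map] at hb
    exact ibu_ge ((hb.mono fun x hx => mul_le_mul_of_nonneg_left hx hc.le))
  apply le_antisymm
  · refine le_of_forall_pos_le_add fun ε hε => ?_
    have e : ∀ᶠ x in l, g x < limsup g l + ε / c :=
      eventually_lt_of_limsup_lt (by have := div_pos hε hc; linarith) hg1
    refine limsup_le_of_le hcg2.isCoboundedUnder_le ?_
    filter_upwards [e] with x hx
    calc c * g x ≤ c * (limsup g l + ε / c) := mul_le_mul_of_nonneg_left hx.le hc.le
      _ = c * limsup g l + ε := by field_simp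
  · refine le_of_forall_pos_le_add fun ε hε => ?_
    have e : ∃ᶠ x in l, limsup g l - ε / c < g x :=
      frequently_lt_of_lt_limsup hg2.isCoboundedUnder_le (by have := div_pos hε hc; linarith)
    have : ∃ᶠ x in l, c * limsup g l - ε ≤ c * g x := by
      refine e.mono fun x hx => ?_
      have := mul_le_mul_of_nonneg_left hx.le hc.le
      calc c * limsup g l - ε = c * (limsup g l - ε / c) := by field_simp
        _ ≤ c * g x := this
    have := le_limsup_of_frequently_le this hcg1
    linarith

lemma real_limsup_comp_le {β : Type*} {l' : Filter β} {m : α → β} (hm : Tendsto m l l')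
    {g : β → ℝ} (hg1 : IsBoundedUnder (· ≤ ·) l' g) (hg2 : IsBoundedUnder (· ≥ ·) l' g) :
    limsup (fun x => g (m x)) l ≤ limsup g l' := by
  obtain ⟨b, hb⟩ := id hg2; rw [eventually_map] at hb
  have hco : IsCoboundedUnder (· ≤ ·) l (fun x => g (m x)) :=
    IsBoundedUnder.isCoboundedUnder_le (ibu_ge (hm.eventually hb))
  refine le_of_forall_pos_le_add fun ε hε => ?_
  have e : ∀ᶠ y in l', g y < limsup g l' + ε := eventually_lt_of_limsup_lt (by linarith) hg1
  exact limsup_le_of_le hco ((hm.eventually e).mono fun x hx => hx.le)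

lemma real_limsup_comp_le' {β : Type*} {l' : Filter β} {m : α → β} (hm : Tendsto m l l')
    {g : β → ℝ} {h : α → ℝ} (hh : ∀ x, h x = g (m x))
    (hg1 : IsBoundedUnder (· ≤ ·) l' g) (hg2 : IsBoundedUnder (· ≥ ·) l' g) :
    limsup h l ≤ limsup g l' := by
  have : limsup h l = limsup (fun x => g (m x)) l :=
    limsup_congr (Eventually.of_forall hh)
  rw [this]
  exact real_limsup_comp_le hm hg1 hg2

end Limsup

/-! ### Clarke derivative: basic machinery -/

section Clarke

variable {Y : Type*} [NormedAddCommGroup Y] [NormedSpace ℝ Y]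

/-- The base filter of the Clarke derivative. -/
noncomputable def pf (x : Y) : Filter (Y × ℝ) := (nhds x) ×ˢ (nhdsWithin (0 : ℝ) (Set.Ioi (0 : ℝ)))

/-- Difference quotient. -/
noncomputable def dq (j : Y → ℝ) (v : Y) (p : Y × ℝ) : ℝ := (j (p.1 + p.2 • v) - j p.1) / p.2

lemma clarkeDeriv_eq (j : Y → ℝ) (x v : Y) :
    clarkeDeriv j x v = limsup (dq j v) (pf x) := rfl

instance pf_neBot (x : Y) : (pf x).NeBot := by
  have : (nhdsWithin (0:ℝ) (Set.Ioi (0:ℝ))).NeBot := nhdsGT_neBot 0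
  exact Filter.prod_neBot.2 ⟨inferInstance, this⟩

lemma eventually_snd_pos (x : Y) : ∀ᶠ p : Y × ℝ in pf x, 0 < p.2 := by
  have h2 : ∀ᶠ t in nhdsWithin (0:ℝ) (Set.Ioi (0:ℝ)), 0 < t := self_mem_nhdsWithin
  exact h2.prod_inr (nhds x)

/-- Local Lipschitz bound on difference quotients. -/
lemma dq_bound (j : Y → ℝ) (x : Y) (hj : LocallyLipschitz j) :
    ∃ K : ℝ, 0 ≤ K ∧ ∀ v : Y, ∀ᶠ p in pf x, |dq j v p| ≤ K * ‖v‖ := by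
  obtain ⟨K, t, ht, hlip⟩ := hj x
  obtain ⟨r, hr, hball⟩ := Metric.mem_nhds_iff.1 ht
  refine ⟨K, K.coe_nonneg, fun v => ?_⟩
  have hδpos : 0 < min (r/2) (r / (2 * (‖v‖ + 1))) := by positivity
  have hmem : (Metric.ball x (r/2)) ×ˢ (Ioo (0:ℝ) (min (r/2) (r / (2 * (‖v‖ + 1))))) ∈ pf x :=
    prod_mem_prod (Metric.ball_mem_nhds x (by positivity))
      (Ioo_mem_nhdsGT hδpos)
  filter_upwards [hmem] with p hp
  obtain ⟨hp1, hp2⟩ := hp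
  have hlampos : 0 < p.2 := hp2.1
  have hyx : ‖p.1 - x‖ < r / 2 := by
    rw [← dist_eq_norm]; exact hp1
  have hv2 : p.2 * ‖v‖ ≤ r / 2 := by
    have h1 : p.2 ≤ r / (2 * (‖v‖ + 1)) := le_of_lt (lt_of_lt_of_le hp2.2 (min_le_right _ _))
    have h2 : p.2 * ‖v‖ ≤ r / (2 * (‖v‖ + 1)) * (‖v‖ + 1) :=
      mul_le_mul h1 (by linarith [norm_nonneg v]) (norm_nonneg v) (by positivity)
    have h3 : r / (2 * (‖v‖ + 1)) * (‖v‖ + 1) = r / 2 := by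
      field_simp
    linarith
  have hmem1 : p.1 ∈ t := hball (by
    rw [Metric.mem_ball, dist_eq_norm]; linarith)
  have hmem2 : p.1 + p.2 • v ∈ t := hball (by
    rw [Metric.mem_ball, dist_eq_norm]
    calc ‖p.1 + p.2 • v - x‖ ≤ ‖p.1 - x‖ + ‖p.2 • v‖ := by
          rw [add_sub_right_comm]; exact norm_add_le _ _
      _ = ‖p.1 - x‖ + p.2 * ‖v‖ := by rw [norm_smul, Real.norm_eq_abs, abs_of_pos hlampos]
      _ < r := by linarith)
  have hd : dist (j (p.1 + p.2 • v)) (j p.1) ≤ K * (p.2 * ‖v‖) := by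
    have := hlip.dist_le_mul _ hmem2 _ hmem1
    calc dist (j (p.1 + p.2 • v)) (j p.1) ≤ K * dist (p.1 + p.2 • v) p.1 := this
      _ = K * (p.2 * ‖v‖) := by
          rw [dist_eq_norm, add_sub_cancel_left, norm_smul, Real.norm_eq_abs,
            abs_of_pos hlampos]
  rw [dq, abs_div, abs_of_pos hlampos, div_le_iff₀ hlampos]
  calc |j (p.1 + p.2 • v) - j p.1| = dist (j (p.1 + p.2 • v)) (j p.1) := (Real.dist_eq _ _).symm
    _ ≤ K * (p.2 * ‖v‖) := hd
    _ = K * ‖v‖ * p.2 := by ring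

lemma dq_ibu_le {j : Y → ℝ} {x : Y} (hj : LocallyLipschitz j) (v : Y) :
    IsBoundedUnder (· ≤ ·) (pf x) (dq j v) := by
  obtain ⟨K, -, hK⟩ := dq_bound j x hj
  exact ibu_le ((hK v).mono fun p hp => (abs_le.1 hp).2)

lemma dq_ibu_ge {j : Y → ℝ} {x : Y} (hj : LocallyLipschitz j) (v : Y) :
    IsBoundedUnder (· ≥ ·) (pf x) (dq j v) := by
  obtain ⟨K, -, hK⟩ := dq_bound j x hj
  exact ibu_ge ((hK v).mono fun p hp => (abs_le.1 hp).1)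

lemma abs_clarkeDeriv_le {j : Y → ℝ} {x : Y} (hj : LocallyLipschitz j) :
    ∃ K : ℝ, 0 ≤ K ∧ ∀ v : Y, |clarkeDeriv j x v| ≤ K * ‖v‖ := by
  obtain ⟨K, hK0, hK⟩ := dq_bound j x hj
  refine ⟨K, hK0, fun v => abs_le.2 ⟨?_, ?_⟩⟩
  · refine le_limsup_of_frequently_le ?_ (dq_ibu_le hj v)
    exact ((hK v).mono fun p hp => (abs_le.1 hp).1).frequently
  · exact limsup_le_of_le (dq_ibu_ge hj v).isCoboundedUnder_le
      ((hK v).mono fun p hp => (abs_le.1 hp).2)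

lemma clarkeDeriv_zero_dir (j : Y → ℝ) (x : Y) : clarkeDeriv j x 0 = 0 := by
  rw [clarkeDeriv_eq]
  have : dq j (0 : Y) = fun _ => (0:ℝ) := by
    funext p; simp [dq]
  rw [this, limsup_const]

/-- Subadditivity of the Clarke derivative in the direction. -/
lemma clarkeDeriv_add_le {j : Y → ℝ} (hj : LocallyLipschitz j) (x v w : Y) :
    clarkeDeriv j x (v + w) ≤ clarkeDeriv j x v + clarkeDeriv j x w := by
  have key : dq j (v + w) = fun p : Y × ℝ => dq j v (p.1 + p.2 • w, p.2) + dq j w p := by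
    funext p
    simp only [dq]
    rw [← add_div]
    congr 1
    have : p.1 + p.2 • (v + w) = p.1 + p.2 • w + p.2 • v := by
      rw [smul_add]; abel
    rw [this]; ring
  have hm : Tendsto (fun p : Y × ℝ => ((p.1 + p.2 • w, p.2) : Y × ℝ)) (pf x) (pf x) := by
    refine Tendsto.prodMk ?_ tendsto_snd
    have h1 : Tendsto (fun p : Y × ℝ => p.1) (pf x) (nhds x) := tendsto_fst
    have h2 : Tendsto (fun p : Y × ℝ => p.2 • w) (pf x) (nhds ((0:ℝ) • w)) :=
      (tendsto_snd.mono_right nhdsWithin_le_nhds).smul_const w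
    have := h1.add h2
    simpa using this
  rw [clarkeDeriv_eq, clarkeDeriv_eq, clarkeDeriv_eq, key]
  have hb1 : IsBoundedUnder (· ≤ ·) (pf x) (fun p : Y × ℝ => dq j v (p.1 + p.2 • w, p.2)) := by
    obtain ⟨b, hb⟩ := id (dq_ibu_le (x := x) hj v); rw [eventually_map] at hb
    exact ibu_le (hm.eventually hb)
  have hb2 : IsBoundedUnder (· ≥ ·) (pf x) (fun p : Y × ℝ => dq j v (p.1 + p.2 • w, p.2)) := by
    obtain ⟨b, hb⟩ := id (dq_ibu_ge (x := x) hj v); rw [eventually_map] at hb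
    exact ibu_ge (hm.eventually hb)
  calc limsup (fun p : Y × ℝ => dq j v (p.1 + p.2 • w, p.2) + dq j w p) (pf x)
      ≤ limsup (fun p : Y × ℝ => dq j v (p.1 + p.2 • w, p.2)) (pf x) + limsup (dq j w) (pf x) :=
        real_limsup_add_le hb1 hb2 (dq_ibu_le hj w) (dq_ibu_ge hj w)
    _ ≤ limsup (dq j v) (pf x) + limsup (dq j w) (pf x) := by
        have := real_limsup_comp_le hm (dq_ibu_le (x := x) hj v) (dq_ibu_ge (x := x) hj v)
        exact add_le_add this le_rfl

lemma neg_clarkeDeriv_le {j : Y → ℝ} (hj : LocallyLipschitz j) (x v : Y) :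
    -clarkeDeriv j x (-v) ≤ clarkeDeriv j x v := by
  have h := clarkeDeriv_add_le hj x v (-v)
  rw [add_neg_cancel, clarkeDeriv_zero_dir] at h
  linarith

lemma tendsto_mul_nhdsWithin_Ioi {c : ℝ} (hc : 0 < c) :
    Tendsto (fun t : ℝ => c * t) (nhdsWithin 0 (Set.Ioi (0:ℝ))) (nhdsWithin 0 (Set.Ioi (0:ℝ))) := by
  rw  [tendsto_nhdsWithin_iff]
  constructor
  · have : Tendsto (fun t : ℝ => c * t) (nhds 0) (nhds (c * 0)) :=
      (continuous_const.mul continuous_id).tendsto 0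
    rw [mul_zero] at this
    exact this.mono_left nhdsWithin_le_nhds
  · exact eventually_mem_nhdsWithin.mono fun t ht => mul_pos hc ht

/-- Positive homogeneity of the Clarke derivative in the direction. -/
lemma clarkeDeriv_smul {j : Y → ℝ} (hj : LocallyLipschitz j) (x v : Y) {c : ℝ} (hc : 0 < c) :
    clarkeDeriv j x (c • v) = c * clarkeDeriv j x v := by
  have key : ∀ (y : Y) (μ : ℝ), dq j (c • v) (y, μ) = c * dq j v (y, c * μ) := by
    intro y μ
    simp only [dq]
    have h1 : μ • (c • v) = (c * μ) • v := by rw [smul_smul, mul_comm]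
    rw [h1, mul_div_assoc', mul_div_mul_left _ _ hc.ne']
  have hm : Tendsto (fun p : Y × ℝ => ((p.1, c * p.2) : Y × ℝ)) (pf x) (pf x) :=
    Tendsto.prodMk tendsto_fst ((tendsto_mul_nhdsWithin_Ioi hc).comp tendsto_snd)
  have hm' : Tendsto (fun p : Y × ℝ => ((p.1, c⁻¹ * p.2) : Y × ℝ)) (pf x) (pf x) :=
    Tendsto.prodMk tendsto_fst ((tendsto_mul_nhdsWithin_Ioi (inv_pos.2 hc)).comp tendsto_snd)
  have hcg1 : IsBoundedUnder (· ≤ ·) (pf x) (fun p : Y × ℝ => c * dq j v p) := by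
    obtain ⟨b, hb⟩ := id (dq_ibu_le (x := x) hj v); rw [eventually_map] at hb
    exact ibu_le (hb.mono fun p hp => mul_le_mul_of_nonneg_left hp hc.le)
  have hcg2 : IsBoundedUnder (· ≥ ·) (pf x) (fun p : Y × ℝ => c * dq j v p) := by
    obtain ⟨b, hb⟩ := id (dq_ibu_ge (x := x) hj v); rw [eventually_map] at hb
    exact ibu_ge (hb.mono fun p hp => mul_le_mul_of_nonneg_left hp hc.le)
  have hmul : limsup (fun p : Y × ℝ => c * dq j v p) (pf x) = c * limsup (dq j v) (pf x) :=
    real_limsup_const_mul hc (dq_ibu_le hj v) (dq_ibu_ge hj v)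
  apply le_antisymm
  · rw [clarkeDeriv_eq, clarkeDeriv_eq, ← hmul]
    exact real_limsup_comp_le' hm (fun p => key p.1 p.2) hcg1 hcg2
  · rw [clarkeDeriv_eq, clarkeDeriv_eq, ← hmul]
    refine real_limsup_comp_le' hm' ?_ (dq_ibu_le hj (c • v)) (dq_ibu_ge hj (c • v))
    intro p
    have := key p.1 (c⁻¹ * p.2)
    rw [this, ← mul_assoc, mul_inv_cancel₀ hc.ne', one_mul]

lemma slice_tendsto (x : Y) :
    Tendsto (fun lam : ℝ => ((x, lam) : Y × ℝ)) (nhdsWithin 0 (Set.Ioi (0:ℝ))) (pf x) :=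
  Tendsto.prodMk tendsto_const_nhds tendsto_id

lemma le_clarkeDeriv_of_slice {j : Y → ℝ} {x v : Y} {r : ℝ} (hj : LocallyLipschitz j)
    (h : ∀ᶠ lam in nhdsWithin (0:ℝ) (Set.Ioi (0:ℝ)), r ≤ dq j v (x, lam)) :
    r ≤ clarkeDeriv j x v := by
  rw [clarkeDeriv_eq]
  refine le_limsup_of_frequently_le ?_ (dq_ibu_le hj v)
  exact (slice_tendsto x).frequently h.frequently

lemma slice_eventually_lt {j : Y → ℝ} {y v : Y} {r : ℝ} (hj : LocallyLipschitz j)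
    (h : clarkeDeriv j y v < r) :
    ∀ᶠ lam in nhdsWithin (0:ℝ) (Set.Ioi (0:ℝ)), dq j v (y, lam) < r := by
  rw [clarkeDeriv_eq] at h
  exact (slice_tendsto y).eventually (eventually_lt_of_limsup_lt h (dq_ibu_le hj v))

lemma tendsto_sub_nhdsWithin_Ioi (t : ℝ) :
    Tendsto (fun z : ℝ => z - t) (nhdsWithin t (Set.Ioi t)) (nhdsWithin 0 (Set.Ioi (0:ℝ))) := by
  rw [tendsto_nhdsWithin_iff]
  constructor
  · have : Tendsto (fun z : ℝ => z - t) (nhds t) (nhds (t - t)) :=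
      (continuous_id.sub continuous_const).tendsto t
    rw [sub_self] at this
    exact this.mono_left nhdsWithin_le_nhds
  · exact eventually_mem_nhdsWithin.mono fun z hz => mem_Ioi.2 (sub_pos.2 hz)

/-- Mean value estimate along a segment with an affine bound on the Clarke derivative. -/
lemma seg_est {φ : Y → ℝ} (hφ : LocallyLipschitz φ) (a d : Y) {β₀ β₁ : ℝ}
    (h : ∀ t ∈ Ico (0:ℝ) 1, clarkeDeriv φ (a + t • d) d ≤ β₀ + β₁ * t) :
    φ (a + d) ≤ φ a + β₀ + β₁ / 2 := by
  set g : ℝ → ℝ := fun t => φ (a + t • d) with hg_def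
  have hgc : Continuous g := by
    apply hφ.continuous.comp
    exact continuous_const.add (continuous_id.smul continuous_const)
  have key : ∀ ε, 0 < ε → φ (a + d) ≤ (φ a + β₀ + β₁ / 2) + ε := by
    intro ε hε
    have contB : ContinuousOn (fun t : ℝ => g 0 + (β₀ + ε) * t + β₁ * t ^ 2 / 2) (Icc 0 1) := by
      fun_prop
    have derB : ∀ t ∈ Ico (0:ℝ) 1, HasDerivWithinAt
        (fun u : ℝ => g 0 + (β₀ + ε) * u + β₁ * u ^ 2 / 2) ((β₀ + ε) + β₁ * t) (Ici t) t := by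
      intro t _
      have h1 : HasDerivAt (fun u : ℝ => u) 1 t := hasDerivAt_id t
      have h2 : HasDerivAt (fun u : ℝ => u ^ 2) (2 * t) t := by simpa using hasDerivAt_pow 2 t
      have h3 := ((h1.const_mul (β₀ + ε)).const_add (g 0)).add ((h2.const_mul β₁).div_const 2)
      have h4 : HasDerivAt (fun u : ℝ => g 0 + (β₀ + ε) * u + β₁ * u ^ 2 / 2)
          ((β₀ + ε) + β₁ * t) t := by
        exact h3.congr_deriv (by ring)
      exact h4.hasDerivWithinAt
    have bound : ∀ t ∈ Ico (0:ℝ) 1, ∀ r, (β₀ + ε) + β₁ * t < r →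
        ∃ᶠ z in nhdsWithin t (Set.Ioi t), slope g t z < r := by
      intro t ht r hr
      have hcd : clarkeDeriv φ (a + t • d) d < r := lt_of_le_of_lt (h t ht) (by linarith)
      have hev := slice_eventually_lt hφ hcd
      have hmap := tendsto_sub_nhdsWithin_Ioi t
      have hEv : ∀ᶠ z in nhdsWithin t (Set.Ioi t), slope g t z < r := by
        filter_upwards [hmap.eventually hev, eventually_mem_nhdsWithin] with z hz hz'
        have heq : slope g t z = dq φ d (a + t • d, z - t) := by
          have e1 : slope g t z = (g z - g t) / (z - t) := by
            rw [slope_def_field]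
          rw [e1]
          simp only [dq]
          congr 2
          have h2' : t + (z - t) = z := by ring
          rw [add_assoc, ← add_smul, h2']
        rw [heq]
        exact hz
      exact hEv.frequently
    have main := image_le_of_liminf_slope_right_le_deriv_boundary (f := g) (a := 0) (b := 1)
      hgc.continuousOn (by norm_num) contB derB bound (right_mem_Icc.2 zero_le_one)
    have hg1 : g 1 = φ (a + d) := by rw [hg_def]; simp
    have hg0 : g 0 = φ a := by rw [hg_def]; simp
    rw [hg1, hg0] at main
    calc φ (a + d) ≤ φ a + (β₀ + ε) * 1 + β₁ * 1 ^ 2 / 2 := by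
          exact main
      _ = (φ a + β₀ + β₁ / 2) + ε := by ring
  exact le_of_forall_pos_le_add key

end Clarke

/-! ### Problem-specific layer -/

section Problem

variable {V : Type*} [NormedAddCommGroup V] [NormedSpace ℝ V]
variable {X : Type*} [NormedAddCommGroup X] [NormedSpace ℝ X]

lemma loclip_add {Y : Type*} [NormedAddCommGroup Y] {f g : Y → ℝ}
    (hf : LocallyLipschitz f) (hg : LocallyLipschitz g) :
    LocallyLipschitz (fun x => f x + g x) := by
  intro x
  obtain ⟨K1, s1, hs1, h1⟩ := hf x
  obtain ⟨K2, s2, hs2, h2⟩ := hg x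
  refine ⟨K1 + K2, s1 ∩ s2, Filter.inter_mem hs1 hs2, ?_⟩
  rw [lipschitzOnWith_iff_dist_le_mul]
  intro y hy z hz
  rw [lipschitzOnWith_iff_dist_le_mul] at h1 h2
  calc dist (f y + g y) (f z + g z) ≤ dist (f y) (f z) + dist (g y) (g z) :=
        dist_add_add_le _ _ _ _
    _ ≤ K1 * dist y z + K2 * dist y z :=
        add_le_add (h1 y hy.1 z hz.1) (h2 y hy.2 z hz.2)
    _ = ↑(K1 + K2) * dist y z := by push_cast; ring

/-- Taylor-type estimate for a potential operator. -/
lemma FA_taylor (A : V → V →L[ℝ] ℝ) (F_A : V → ℝ)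
    (hA_pot : ∀ u v : V, HasLineDerivAt ℝ F_A (A u v) u v)
    (y d : V) (l₀ C : ℝ) (hC : ∀ s ∈ Icc (0:ℝ) 1, |A (y + s • d) d - l₀| ≤ C) :
    |F_A (y + d) - F_A y - l₀| ≤ C := by
  have hF : ∀ s : ℝ, HasDerivAt (fun u : ℝ => F_A (y + u • d)) (A (y + s • d) d) s := by
    intro s
    have h0 : HasDerivAt (fun t : ℝ => F_A (y + s • d + t • d)) (A (y + s • d) d) (0:ℝ) :=
      hA_pot (y + s • d) d
    have h1 : HasDerivAt (fun u : ℝ => u - s) 1 s := (hasDerivAt_id s).sub_const s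
    have h3 : HasDerivAt ((fun t : ℝ => F_A (y + s • d + t • d)) ∘ (fun u : ℝ => u - s))
        (A (y + s • d) d * 1) s := by
      apply HasDerivAt.comp_of_eq s h0 h1
      simp
    have h4 : ((fun t : ℝ => F_A (y + s • d + t • d)) ∘ fun u : ℝ => u - s) =
        (fun u : ℝ => F_A (y + u • d)) := by
      funext u
      simp only [Function.comp_apply]
      have h5 : s + (u - s) = u := by ring
      rw [add_assoc, ← add_smul, h5]
    rw [h4, mul_one] at h3
    exact h3
  set G : ℝ → ℝ := fun s => F_A (y + s • d) - s * l₀ with hG_def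
  have hG : ∀ s ∈ Icc (0:ℝ) 1, HasDerivWithinAt G (A (y + s • d) d - l₀) (Icc (0:ℝ) 1) s :=
    fun s _ => ((hF s).sub (hasDerivAt_mul_const l₀)).hasDerivWithinAt
  have hbound : ∀ s ∈ Ico (0:ℝ) 1, ‖A (y + s • d) d - l₀‖ ≤ C := by
    intro s hs
    rw [Real.norm_eq_abs]
    exact hC s ⟨hs.1, hs.2.le⟩
  have := norm_image_sub_le_of_norm_deriv_le_segment_01' hG hbound
  have heq : F_A (y + d) - F_A y - l₀ = G 1 - G 0 := by
    simp only [hG_def, one_smul, zero_smul, add_zero]; ring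
  rw [heq, ← Real.norm_eq_abs]
  exact this

/-- Convergence of difference quotients of the smooth part. -/
lemma smooth_tendsto (A : V → V →L[ℝ] ℝ) (F_A : V → ℝ) (L_A : ℝ) (hL_A : 0 < L_A)
    (hA_lip : ∀ u v : V, ‖A u - A v‖ ≤ L_A * ‖u - v‖)
    (hA_pot : ∀ u v : V, HasLineDerivAt ℝ F_A (A u v) u v)
    (f : V →L[ℝ] ℝ) (u d : V) :
    Tendsto (dq (fun v => F_A v - f v) d) (pf u) (𝓝 (A u d - f d)) := by
  have hL : (0:ℝ) ≤ L_A := hL_A.le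
  have hbd : ∀ᶠ p in pf u,
      dist (dq (fun v => F_A v - f v) d p) (A u d - f d)
        ≤ L_A * (‖p.1 - u‖ + p.2 * ‖d‖) * ‖d‖ := by
    filter_upwards [eventually_snd_pos u] with p hp
    have htay : |F_A (p.1 + p.2 • d) - F_A p.1 - p.2 * (A u d)|
        ≤ L_A * (‖p.1 - u‖ + p.2 * ‖d‖) * (p.2 * ‖d‖) := by
      refine FA_taylor A F_A hA_pot p.1 (p.2 • d) (p.2 * A u d)
        (L_A * (‖p.1 - u‖ + p.2 * ‖d‖) * (p.2 * ‖d‖)) ?_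
      intro s hs
      have h6 : ‖p.1 + s • p.2 • d - u‖ ≤ ‖p.1 - u‖ + p.2 * ‖d‖ := by
        have h7 : |s| * (p.2 * ‖d‖) ≤ 1 * (p.2 * ‖d‖) := by
          refine mul_le_mul_of_nonneg_right ?_ (by positivity)
          rw [abs_of_nonneg hs.1]; exact hs.2
        calc ‖p.1 + s • p.2 • d - u‖ = ‖(p.1 - u) + s • p.2 • d‖ := by congr 1; abel
          _ ≤ ‖p.1 - u‖ + ‖s • p.2 • d‖ := norm_add_le _ _
          _ ≤ ‖p.1 - u‖ + p.2 * ‖d‖ := by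
              rw [norm_smul, norm_smul, Real.norm_eq_abs, Real.norm_eq_abs,
                abs_of_pos hp]
              rw [one_mul] at h7
              linarith
      have e1 : (A (p.1 + s • p.2 • d)) (p.2 • d) - p.2 * A u d
          = (A (p.1 + s • p.2 • d) - A u) (p.2 • d) := by
        simp [ContinuousLinearMap.sub_apply, map_smul, smul_eq_mul]
        ring
      rw [e1, ← Real.norm_eq_abs]
      calc ‖(A (p.1 + s • p.2 • d) - A u) (p.2 • d)‖
          ≤ ‖A (p.1 + s • p.2 • d) - A u‖ * ‖p.2 • d‖ :=
            (A (p.1 + s • p.2 • d) - A u).le_opNorm _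
        _ = ‖A (p.1 + s • p.2 • d) - A u‖ * (p.2 * ‖d‖) := by
            rw [norm_smul, Real.norm_eq_abs, abs_of_pos hp]
        _ ≤ (L_A * ‖p.1 + s • p.2 • d - u‖) * (p.2 * ‖d‖) :=
            mul_le_mul_of_nonneg_right (hA_lip _ _) (by positivity)
        _ ≤ L_A * (‖p.1 - u‖ + p.2 * ‖d‖) * (p.2 * ‖d‖) :=
            mul_le_mul_of_nonneg_right (mul_le_mul_of_nonneg_left h6 hL) (by positivity)
    have heq : dq (fun v => F_A v - f v) d p - (A u d - f d)
        = (F_A (p.1 + p.2 • d) - F_A p.1 - p.2 * (A u d)) / p.2 := by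
      simp only [dq]
      have hf : f (p.1 + p.2 • d) = f p.1 + p.2 * f d := by
        rw [map_add, map_smul, smul_eq_mul]
      rw [hf]
      field_simp
      ring
    rw [Real.dist_eq, heq, abs_div, abs_of_pos hp, div_le_iff₀ hp]
    calc |F_A (p.1 + p.2 • d) - F_A p.1 - p.2 * A u d|
        ≤ L_A * (‖p.1 - u‖ + p.2 * ‖d‖) * (p.2 * ‖d‖) := htay
      _ = L_A * (‖p.1 - u‖ + p.2 * ‖d‖) * ‖d‖ * p.2 := by ring
  have htend : Tendsto (fun p : V × ℝ => L_A * (‖p.1 - u‖ + p.2 * ‖d‖) * ‖d‖) (pf u) (𝓝 0) := by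
    have h1 : Tendsto (fun p : V × ℝ => p.1) (pf u) (𝓝 u) := tendsto_fst
    have h2 : Tendsto (fun p : V × ℝ => p.2) (pf u) (𝓝 0) :=
      tendsto_snd.mono_right nhdsWithin_le_nhds
    have h3 := ((((h1.sub_const u).norm).add (h2.mul_const ‖d‖)).const_mul L_A).mul_const ‖d‖
    simpa using h3
  rw [tendsto_iff_dist_tendsto_zero]
  exact squeeze_zero' (Eventually.of_forall fun _ => dist_nonneg) hbd htend

/-- The smooth part is locally Lipschitz. -/
lemma Fsm_loclip (A : V → V →L[ℝ] ℝ) (F_A : V → ℝ) (L_A : ℝ) (hL_A : 0 < L_A)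
    (hA_lip : ∀ u v : V, ‖A u - A v‖ ≤ L_A * ‖u - v‖)
    (hA_pot : ∀ u v : V, HasLineDerivAt ℝ F_A (A u v) u v)
    (f : V →L[ℝ] ℝ) :
    LocallyLipschitz (fun v => F_A v - f v) := by
  intro x
  refine ⟨Real.toNNReal (3 * L_A + ‖A x‖ + ‖f‖), Metric.ball x 1,
    Metric.ball_mem_nhds x one_pos, ?_⟩
  rw [lipschitzOnWith_iff_dist_le_mul]
  intro z hz y hy
  rw [Metric.mem_ball, dist_eq_norm] at hz hy
  have hzy : ‖z - y‖ ≤ 2 := by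
    calc ‖z - y‖ = ‖(z - x) + (x - y)‖ := by congr 1; abel
      _ ≤ ‖z - x‖ + ‖x - y‖ := norm_add_le _ _
      _ ≤ 2 := by rw [norm_sub_rev x y]; linarith
  have htay : |F_A z - F_A y - A x (z - y)| ≤ 3 * L_A * ‖z - y‖ := by
    have h1 := FA_taylor A F_A hA_pot y (z - y) (A x (z - y)) (3 * L_A * ‖z - y‖) ?_
    · rw [add_sub_cancel] at h1  -- y + (z - y) = z
      exact h1
    intro s hs
    have e1 : A (y + s • (z - y)) (z - y) - A x (z - y) = (A (y + s • (z - y)) - A x) (z - y) := by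
      simp [ContinuousLinearMap.sub_apply]
    rw [e1, ← Real.norm_eq_abs]
    have h2 : ‖y + s • (z - y) - x‖ ≤ 3 := by
      calc ‖y + s • (z - y) - x‖ = ‖(y - x) + s • (z - y)‖ := by congr 1; abel
        _ ≤ ‖y - x‖ + ‖s • (z - y)‖ := norm_add_le _ _
        _ ≤ 1 + 1 * 2 := by
            refine add_le_add hy.le ?_
            rw [norm_smul, Real.norm_eq_abs]
            refine mul_le_mul ?_ hzy (norm_nonneg _) zero_le_one
            rw [abs_of_nonneg hs.1]; exact hs.2
        _ ≤ 3 := by norm_num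
    calc ‖(A (y + s • (z - y)) - A x) (z - y)‖
        ≤ ‖A (y + s • (z - y)) - A x‖ * ‖z - y‖ := ContinuousLinearMap.le_opNorm _ _
      _ ≤ (L_A * ‖y + s • (z - y) - x‖) * ‖z - y‖ :=
          mul_le_mul_of_nonneg_right (hA_lip _ _) (norm_nonneg _)
      _ ≤ 3 * L_A * ‖z - y‖ := by
          have h3 := mul_le_mul_of_nonneg_right
            (mul_le_mul_of_nonneg_left h2 hL_A.le) (norm_nonneg (z - y))
          linarith
  have hAx : |A x (z - y)| ≤ ‖A x‖ * ‖z - y‖ := by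
    rw [← Real.norm_eq_abs]; exact (A x).le_opNorm _
  have hfb : |f (z - y)| ≤ ‖f‖ * ‖z - y‖ := by
    rw [← Real.norm_eq_abs]; exact f.le_opNorm _
  have hfzy : f z - f y = f (z - y) := (map_sub f z y).symm
  rw [Real.dist_eq, dist_eq_norm]
  have hcoe : (Real.toNNReal (3 * L_A + ‖A x‖ + ‖f‖) : ℝ) = 3 * L_A + ‖A x‖ + ‖f‖ := by
    rw [Real.coe_toNNReal]
    positivity
  rw [hcoe]
  have : |F_A z - f z - (F_A y - f y)| ≤ |F_A z - F_A y - A x (z - y)| + |A x (z - y)| + |f (z - y)| := by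
    have e2 : F_A z - f z - (F_A y - f y)
        = (F_A z - F_A y - A x (z - y)) + A x (z - y) - f (z - y) := by
      rw [← hfzy]; ring
    rw [e2]
    calc |F_A z - F_A y - A x (z - y) + A x (z - y) - f (z - y)|
        ≤ |F_A z - F_A y - A x (z - y) + A x (z - y)| + |f (z - y)| := abs_sub _ _
      _ ≤ |F_A z - F_A y - A x (z - y)| + |A x (z - y)| + |f (z - y)| := by
          linarith [abs_add_le (F_A z - F_A y - A x (z - y)) (A x (z - y))]
  nlinarith [norm_nonneg (z - y)]

/-- Upper bound for the Clarke derivative of the full functional (chain rule). -/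
lemma cd_upper (A : V → V →L[ℝ] ℝ) (F_A : V → ℝ) (L_A : ℝ) (hL_A : 0 < L_A)
    (hA_lip : ∀ u v : V, ‖A u - A v‖ ≤ L_A * ‖u - v‖)
    (hA_pot : ∀ u v : V, HasLineDerivAt ℝ F_A (A u v) u v)
    (J : X → X → ℝ) (hJ_lip : ∀ w : X, LocallyLipschitz (J w))
    (γ : V →L[ℝ] X) (f : V →L[ℝ] ℝ) (ω : X) (u d : V) :
    clarkeDeriv (fun v => F_A v - f v + J ω (γ v)) u d
      ≤ A u d - f d + clarkeDeriv (J ω) (γ u) (γ d) := by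
  have hJγ : LocallyLipschitz (fun v : V => J ω (γ v)) :=
    (hJ_lip ω).comp γ.lipschitz.locallyLipschitz
  have hsplit : dq (fun v => F_A v - f v + J ω (γ v)) d
      = fun p : V × ℝ => dq (fun v => F_A v - f v) d p + dq (fun v : V => J ω (γ v)) d p := by
    funext p
    simp only [dq]
    rw [← add_div]
    ring_nf
  rw [clarkeDeriv_eq, hsplit,
    real_tendsto_add_limsup (smooth_tendsto A F_A L_A hL_A hA_lip hA_pot f u d)
      (dq_ibu_le hJγ d) (dq_ibu_ge hJγ d)]
  refine add_le_add le_rfl ?_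
  have hm : Tendsto (fun p : V × ℝ => ((γ p.1, p.2) : X × ℝ)) (pf u) (pf (γ u)) :=
    Tendsto.prodMk ((γ.continuous.tendsto u).comp tendsto_fst) tendsto_snd
  rw [clarkeDeriv_eq]
  refine real_limsup_comp_le' hm ?_ (dq_ibu_le (hJ_lip ω) (γ d)) (dq_ibu_ge (hJ_lip ω) (γ d))
  intro p
  simp only [dq, map_add, map_smul]

/-- Monotonicity estimate for the family of functionals. -/
lemma cd_mono (A : V → V →L[ℝ] ℝ) (F_A : V → ℝ) (L_A : ℝ) (hL_A : 0 < L_A)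
    (hA_lip : ∀ u v : V, ‖A u - A v‖ ≤ L_A * ‖u - v‖)
    (hA_pot : ∀ u v : V, HasLineDerivAt ℝ F_A (A u v) u v)
    (m_A : ℝ) (hA_mono : ∀ u v : V, m_A * ‖u - v‖ ^ 2 ≤ (A u - A v) (u - v))
    (J : X → X → ℝ) (hJ_lip : ∀ w : X, LocallyLipschitz (J w))
    (m_α m_L : ℝ) (hm_α : 0 ≤ m_α) (hm_L : 0 ≤ m_L)
    (hJ_mono : ∀ w₁ w₂ v₁ v₂ : X,
      clarkeDeriv (J w₁) v₁ (v₂ - v₁) + clarkeDeriv (J w₂) v₂ (v₁ - v₂)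
        ≤ m_α * ‖v₁ - v₂‖ ^ 2 + m_L * ‖w₁ - w₂‖ * ‖v₁ - v₂‖)
    (γ : V →L[ℝ] X) (f : V →L[ℝ] ℝ) (ω₁ ω₂ : X) (u₁ u₂ : V) :
    clarkeDeriv (fun v => F_A v - f v + J ω₁ (γ v)) u₁ (u₂ - u₁)
      + clarkeDeriv (fun v => F_A v - f v + J ω₂ (γ v)) u₂ (u₁ - u₂)
      ≤ -((m_A - m_α * ‖γ‖ ^ 2) * ‖u₁ - u₂‖ ^ 2)
        + m_L * ‖γ‖ * ‖ω₁ - ω₂‖ * ‖u₁ - u₂‖ := by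
  have h1 := cd_upper A F_A L_A hL_A hA_lip hA_pot J hJ_lip γ f ω₁ u₁ (u₂ - u₁)
  have h2 := cd_upper A F_A L_A hL_A hA_lip hA_pot J hJ_lip γ f ω₂ u₂ (u₁ - u₂)
  rw [map_sub γ u₂ u₁] at h1
  rw [map_sub γ u₁ u₂] at h2
  have hJ := hJ_mono ω₁ ω₂ (γ u₁) (γ u₂)
  have hA := hA_mono u₁ u₂
  have e1 : A u₁ (u₂ - u₁) + A u₂ (u₁ - u₂) = -((A u₁ - A u₂) (u₁ - u₂)) := by
    simp only [ContinuousLinearMap.sub_apply, map_sub]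
    ring
  have e2 : f (u₂ - u₁) + f (u₁ - u₂) = 0 := by
    simp only [map_sub]; ring
  have hγ1 : ‖γ u₁ - γ u₂‖ ≤ ‖γ‖ * ‖u₁ - u₂‖ := by
    rw [← map_sub]; exact γ.le_opNorm _
  have hγ0 : (0:ℝ) ≤ ‖γ u₁ - γ u₂‖ := norm_nonneg _
  have hD0 : (0:ℝ) ≤ ‖u₁ - u₂‖ := norm_nonneg _
  have hω0 : (0:ℝ) ≤ ‖ω₁ - ω₂‖ := norm_nonneg _
  have hmα : m_α * ‖γ u₁ - γ u₂‖ ^ 2 ≤ m_α * (‖γ‖ * ‖u₁ - u₂‖) ^ 2 := by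
    refine mul_le_mul_of_nonneg_left ?_ hm_α
    exact pow_le_pow_left₀ hγ0 hγ1 2
  have hmL : m_L * ‖ω₁ - ω₂‖ * ‖γ u₁ - γ u₂‖ ≤ m_L * ‖ω₁ - ω₂‖ * (‖γ‖ * ‖u₁ - u₂‖) :=
    mul_le_mul_of_nonneg_left hγ1 (by positivity)
  nlinarith [h1, h2, hJ, hA, e1, e2]

section Exists

variable (A : V → V →L[ℝ] ℝ) (F_A : V → ℝ) (L_A : ℝ)
variable (J : X → X → ℝ) (γ : V →L[ℝ] X) (f : V →L[ℝ] ℝ)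
variable (m_A m_α m_L : ℝ)

/-- Existence of a critical point of `v ↦ F_A v - f v + J ω (γ v)`. -/
lemma exists_crit [CompleteSpace V] (hL_A : 0 < L_A)
    (hA_lip : ∀ u v : V, ‖A u - A v‖ ≤ L_A * ‖u - v‖)
    (hA_pot : ∀ u v : V, HasLineDerivAt ℝ F_A (A u v) u v)
    (hA_mono : ∀ u v : V, m_A * ‖u - v‖ ^ 2 ≤ (A u - A v) (u - v))
    (hJ_lip : ∀ w : X, LocallyLipschitz (J w))
    (hm_α : 0 ≤ m_α) (hm_L : 0 ≤ m_L)
    (hJ_mono : ∀ w₁ w₂ v₁ v₂ : X,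
      clarkeDeriv (J w₁) v₁ (v₂ - v₁) + clarkeDeriv (J w₂) v₂ (v₁ - v₂)
        ≤ m_α * ‖v₁ - v₂‖ ^ 2 + m_L * ‖w₁ - w₂‖ * ‖v₁ - v₂‖)
    (hc : 0 < m_A - m_α * ‖γ‖ ^ 2) (ω : X) :
    ∃ u : V, ∀ d : V, 0 ≤ clarkeDeriv (fun v => F_A v - f v + J ω (γ v)) u d := by
  obtain ⟨c, hc_def⟩ : ∃ c : ℝ, c = m_A - m_α * ‖γ‖ ^ 2 := ⟨_, rfl⟩
  rw [← hc_def] at hc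
  set φ : V → ℝ := fun v => F_A v - f v + J ω (γ v) with hφ_def
  have hφ : LocallyLipschitz φ := by
    refine loclip_add (Fsm_loclip A F_A L_A hL_A hA_lip hA_pot f) ?_
    exact (hJ_lip ω).comp γ.lipschitz.locallyLipschitz
  -- monotonicity along lines
  have mono_line : ∀ (a d : V) (s t : ℝ), s < t →
      clarkeDeriv φ (a + s • d) d + clarkeDeriv φ (a + t • d) (-d)
        ≤ -(c * (t - s) * ‖d‖ ^ 2) := by
    intro a d s t hst
    have hts : 0 < t - s := sub_pos.2 hst
    have h := cd_mono A F_A L_A hL_A hA_lip hA_pot m_A hA_mono J hJ_lip m_α m_L hm_α hm_L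
      hJ_mono γ f ω ω (a + s • d) (a + t • d)
    have e1 : a + t • d - (a + s • d) = (t - s) • d := by
      rw [sub_smul]; abel
    have e2 : a + s • d - (a + t • d) = (t - s) • (-d) := by
      rw [smul_neg, sub_smul]; abel
    rw [e1, e2, clarkeDeriv_smul hφ _ _ hts, clarkeDeriv_smul hφ _ _ hts,
      sub_self, norm_zero, ← hc_def] at h
    have e3 : ‖(t - s) • (-d)‖ = (t - s) * ‖d‖ := by
      rw [norm_smul, Real.norm_eq_abs, abs_of_pos hts, norm_neg]
    rw [e3] at h
    have h4 : (t - s) * (clarkeDeriv φ (a + s • d) d + clarkeDeriv φ (a + t • d) (-d))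
        ≤ (t - s) * (-(c * (t - s) * ‖d‖ ^ 2)) := by nlinarith [h]
    exact le_of_mul_le_mul_left h4 hts
  obtain ⟨K₀, hK₀0, hK₀⟩ := abs_clarkeDeriv_le (x := (0:V)) hφ
  -- coercivity / boundedness below
  have coercive : ∀ v : V, φ 0 - K₀ ^ 2 / (2 * c) ≤ φ v := by
    intro v
    have hseg : φ (v + -v) ≤ φ v + (K₀ * ‖v‖ - c * ‖v‖ ^ 2) + c * ‖v‖ ^ 2 / 2 := by
      refine seg_est hφ v (-v) ?_
      intro t ht
      have hpt : v + t • (-v) = (0:V) + (1 - t) • v := by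
        rw [smul_neg, sub_smul, one_smul]; abel
      rw [hpt]
      have hm := mono_line 0 v 0 (1 - t) (by linarith [ht.2])
      have h0 : (0:V) + (0:ℝ) • v = 0 := by simp
      rw [h0] at hm
      have hb := (abs_le.1 (hK₀ v)).1
      linarith
    rw [add_neg_cancel] at hseg
    have key : K₀ * ‖v‖ - c * ‖v‖ ^ 2 / 2 ≤ K₀ ^ 2 / (2 * c) := by
      rw [le_div_iff₀ (by linarith : (0:ℝ) < 2 * c)]
      nlinarith [sq_nonneg (c * ‖v‖ - K₀)]
    linarith
  -- midpoint strong convexity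
  have midpoint : ∀ u₁ u₂ : V,
      φ (u₁ + (1/2 : ℝ) • (u₂ - u₁)) ≤ (φ u₁ + φ u₂) / 2 - c / 8 * ‖u₂ - u₁‖ ^ 2 := by
    intro u₁ u₂
    set Δ : V := u₂ - u₁ with hΔ_def
    set D : ℝ := ‖Δ‖ with hD_def
    set hT : ℝ → ℝ := fun t => clarkeDeriv φ (u₁ + t • Δ) Δ - c * t * D ^ 2 with hhT
    set kT : ℝ → ℝ := fun t => clarkeDeriv φ (u₁ + t • Δ) (-Δ) + c * t * D ^ 2 with hkT
    have pair : ∀ s t : ℝ, s < t → hT s + kT t ≤ 0 := by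
      intro s t hst
      have := mono_line u₁ Δ s t hst
      simp only [hhT, hkT]
      nlinarith [this]
    have ne₁ : (hT '' Ico (0:ℝ) (1/2)).Nonempty :=
      ⟨hT 0, mem_image_of_mem _ (by constructor <;> norm_num)⟩
    have ne₂ : (kT '' Ioc (1/2:ℝ) 1).Nonempty :=
      ⟨kT 1, mem_image_of_mem _ (by constructor <;> norm_num)⟩
    have bdd₁ : BddAbove (hT '' Ico (0:ℝ) (1/2)) := by
      refine ⟨-kT 1, ?_⟩
      rintro x ⟨s, hs, rfl⟩
      have := pair s 1 (by linarith [hs.2])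
      linarith
    have bdd₂ : BddAbove (kT '' Ioc (1/2:ℝ) 1) := by
      refine ⟨-hT 0, ?_⟩
      rintro x ⟨t, ht, rfl⟩
      have := pair 0 t (by linarith [ht.1])
      linarith
    set S₁ : ℝ := sSup (hT '' Ico (0:ℝ) (1/2)) with hS₁_def
    set S₂ : ℝ := sSup (kT '' Ioc (1/2:ℝ) 1) with hS₂_def
    have hS₁ : ∀ s ∈ Ico (0:ℝ) (1/2), hT s ≤ S₁ :=
      fun s hs => le_csSup bdd₁ (mem_image_of_mem _ hs)
    have hS₂ : ∀ t ∈ Ioc (1/2:ℝ) 1, kT t ≤ S₂ :=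
      fun t ht => le_csSup bdd₂ (mem_image_of_mem _ ht)
    have hS12 : S₁ + S₂ ≤ 0 := by
      have h1 : S₁ ≤ -S₂ := by
        refine csSup_le ne₁ ?_
        rintro x ⟨s, hs, rfl⟩
        have h2 : S₂ ≤ -hT s := by
          refine csSup_le ne₂ ?_
          rintro y ⟨t, ht, rfl⟩
          have := pair s t (lt_of_lt_of_le hs.2 ht.1.le)
          linarith
        linarith
      linarith
    have seg1 : φ (u₁ + (1/2 : ℝ) • Δ) ≤ φ u₁ + S₁ / 2 + (c * D ^ 2 / 4) / 2 := by
      refine seg_est hφ u₁ ((1/2 : ℝ) • Δ) ?_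
      intro t ht
      have he : (t : ℝ) * (1/2) = t / 2 := by ring
      have hpt : u₁ + t • ((1/2 : ℝ) • Δ) = u₁ + (t/2) • Δ := by rw [smul_smul, he]
      rw [hpt, clarkeDeriv_smul hφ _ _ (by norm_num : (0:ℝ) < 1/2)]
      have := hS₁ (t/2) ⟨by linarith [ht.1], by linarith [ht.2]⟩
      simp only [hhT] at this
      linarith
    have seg2 : φ (u₂ + -((1/2 : ℝ) • Δ)) ≤ φ u₂ + (S₂ / 2 - c * D ^ 2 / 2) + (c * D ^ 2 / 4) / 2 := by
      refine seg_est hφ u₂ (-((1/2 : ℝ) • Δ)) ?_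
      intro t ht
      have hpt : u₂ + t • (-((1/2 : ℝ) • Δ)) = u₁ + (1 - t/2) • Δ := by
        rw [hΔ_def]
        module
      have hdir : -((1/2 : ℝ) • Δ) = (1/2 : ℝ) • (-Δ) := by rw [smul_neg]
      rw [hpt, hdir, clarkeDeriv_smul hφ _ _ (by norm_num : (0:ℝ) < 1/2)]
      have hmem : (1 - t/2) ∈ Ioc (1/2:ℝ) 1 := ⟨by linarith [ht.2], by linarith [ht.1]⟩
      have := hS₂ _ hmem
      simp only [hkT] at this
      linarith
    have hmid : u₂ + -((1/2 : ℝ) • Δ) = u₁ + (1/2 : ℝ) • Δ := by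
      rw [hΔ_def]; module
    rw [hmid] at seg2
    linarith
  -- minimizing sequence
  have hbdd : BddBelow (range φ) := by
    refine ⟨φ 0 - K₀ ^ 2 / (2 * c), ?_⟩
    rintro x ⟨v, rfl⟩
    exact coercive v
  set I : ℝ := sInf (range φ) with hI_def
  have hIle : ∀ v, I ≤ φ v := fun v => csInf_le hbdd (mem_range_self v)
  have happrox : ∀ n : ℕ, ∃ u, φ u < I + 1/((n:ℝ)+1) := by
    intro n
    have hpos : (0:ℝ) < 1/((n:ℝ)+1) := by positivity
    obtain ⟨y, ⟨u, rfl⟩, hy⟩ := Real.lt_sInf_add_pos (range_nonempty φ) hpos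
    exact ⟨u, hy⟩
  choose U hU using happrox
  have hcauchy : CauchySeq U := by
    refine cauchySeq_of_le_tendsto_0 (fun N => Real.sqrt (8/c * (1/((N:ℝ)+1)))) ?_ ?_
    · intro n m N hn hm
      have h1 : φ (U n) < I + 1/((N:ℝ)+1) := by
        refine lt_of_lt_of_le (hU n) ?_
        have : (1:ℝ)/((n:ℝ)+1) ≤ 1/((N:ℝ)+1) := by
          apply one_div_le_one_div_of_le
          · positivity
          · have : (N:ℝ) ≤ (n:ℝ) := Nat.cast_le.2 hn
            linarith
        linarith
      have h2 : φ (U m) < I + 1/((N:ℝ)+1) := by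
        refine lt_of_lt_of_le (hU m) ?_
        have : (1:ℝ)/((m:ℝ)+1) ≤ 1/((N:ℝ)+1) := by
          apply one_div_le_one_div_of_le
          · positivity
          · have : (N:ℝ) ≤ (m:ℝ) := Nat.cast_le.2 hm
            linarith
        linarith
      have hmid := midpoint (U n) (U m)
      have hImid := hIle (U n + (1/2 : ℝ) • (U m - U n))
      have hsq : ‖U m - U n‖ ^ 2 ≤ 8/c * (1/((N:ℝ)+1)) := by
        have h3 : c/8 * ‖U m - U n‖ ^ 2 ≤ 1/((N:ℝ)+1) := by linarith
        have h4 : (0:ℝ) < c/8 := by linarith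
        rw [div_mul_eq_mul_div, le_div_iff₀ (by linarith : (0:ℝ) < c)]
        nlinarith
      rw [dist_eq_norm]
      refine Real.le_sqrt_of_sq_le ?_
      rw [norm_sub_rev]
      exact hsq
    · have h1 : Tendsto (fun N : ℕ => 8/c * (1/((N:ℝ)+1))) atTop (𝓝 0) := by
        have := tendsto_one_div_add_atTop_nhds_zero_nat.const_mul (8/c)
        simpa using this
      have h2 := (Real.continuous_sqrt.tendsto 0).comp h1
      simpa [Function.comp_def] using h2
  obtain ⟨u, hu⟩ := cauchySeq_tendsto_of_complete hcauchy
  have hmin : ∀ v, φ u ≤ φ v := by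
    have hφu : Tendsto (fun n => φ (U n)) atTop (𝓝 (φ u)) :=
      (hφ.continuous.tendsto u).comp hu
    have hupper : Tendsto (fun n : ℕ => I + 1/((n:ℝ)+1)) atTop (𝓝 I) := by
      have := tendsto_one_div_add_atTop_nhds_zero_nat.const_add I
      simpa using this
    have hI2 : Tendsto (fun n => φ (U n)) atTop (𝓝 I) :=
      tendsto_of_tendsto_of_tendsto_of_le_of_le tendsto_const_nhds hupper
        (fun n => hIle (U n)) (fun n => (hU n).le)
    have heq : φ u = I := tendsto_nhds_unique hφu hI2
    intro v; rw [heq]; exact hIle v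
  refine ⟨u, fun d => ?_⟩
  refine le_clarkeDeriv_of_slice hφ ?_
  filter_upwards [eventually_mem_nhdsWithin] with lam hlam
  simp only [dq]
  exact div_nonneg (sub_nonneg.2 (hmin _)) (le_of_lt hlam)

end Exists

/-- From a critical point, construct the subgradient `z` via Hahn–Banach. -/
lemma exists_z (A : V → V →L[ℝ] ℝ) (J : X → X → ℝ) (hJ_lip : ∀ w : X, LocallyLipschitz (J w))
    (γ : V →L[ℝ] X) (f : V →L[ℝ] ℝ) (u : V)
    (hmaster : ∀ v : V, f v - A u v ≤ clarkeDeriv (J (γ u)) (γ u) (γ v)) :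
    ∃ z ∈ clarkeSubdiff (J (γ u)) (γ u), ∀ v : V, A u v + z (γ v) = f v := by
  set p : X → ℝ := clarkeDeriv (J (γ u)) (γ u) with hp_def
  have hpadd : ∀ x y : X, p (x + y) ≤ p x + p y :=
    fun x y => clarkeDeriv_add_le (hJ_lip (γ u)) (γ u) x y
  have hphom : ∀ r : ℝ, 0 < r → ∀ x : X, p (r • x) = r * p x :=
    fun r hr x => clarkeDeriv_smul (hJ_lip (γ u)) (γ u) x hr
  have hp0 : p 0 = 0 := clarkeDeriv_zero_dir _ _
  obtain ⟨K, hK0, hKp⟩ := abs_clarkeDeriv_le (x := γ u) (hJ_lip (γ u))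
  set ℓ : V →L[ℝ] ℝ := f - A u with hℓ_def
  have hℓ : ∀ v : V, ℓ v = f v - A u v := fun v => rfl
  have hℓp : ∀ v : V, ℓ v ≤ p (γ v) := fun v => hmaster v
  have key : ∀ a b : V, γ a = γ b → ℓ a = ℓ b := by
    intro a b hab
    have h1 : ℓ (a - b) ≤ p (γ (a - b)) := hℓp (a - b)
    have h2 : ℓ (b - a) ≤ p (γ (b - a)) := hℓp (b - a)
    have h3 : γ (a - b) = 0 := by rw [map_sub, hab, sub_self]
    have h4 : γ (b - a) = 0 := by rw [map_sub, hab, sub_self]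
    rw [h3, hp0, map_sub] at h1
    rw [h4, hp0, map_sub] at h2
    linarith
  set S : Submodule ℝ X := LinearMap.range (γ.toLinearMap) with hS_def
  have hmemS : ∀ v : V, γ v ∈ S := fun v => LinearMap.mem_range.mpr ⟨v, rfl⟩
  set σ : S → V := fun s => Classical.choose (LinearMap.mem_range.mp s.2) with hσ_def
  have hσ : ∀ s : S, γ (σ s) = (s : X) :=
    fun s => Classical.choose_spec (LinearMap.mem_range.mp s.2)
  set g : S →ₗ[ℝ] ℝ :=
    { toFun := fun s => ℓ (σ s)
      map_add' := by
        intro s t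
        show ℓ (σ (s + t)) = ℓ (σ s) + ℓ (σ t)
        have hγ : γ (σ (s + t)) = γ (σ s + σ t) := by
          rw [hσ (s + t), map_add, hσ, hσ, Submodule.coe_add]
        rw [key _ _ hγ, map_add]
      map_smul' := by
        intro r s
        show ℓ (σ (r • s)) = r * ℓ (σ s)
        have hγ : γ (σ (r • s)) = γ (r • σ s) := by
          rw [hσ (r • s), map_smul, hσ, SetLike.val_smul]
        rw [key _ _ hγ, map_smul, smul_eq_mul] } with hg_def
  have hgle : ∀ s : (LinearPMap.mk S g : X →ₗ.[ℝ] ℝ).domain,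
      (LinearPMap.mk S g : X →ₗ.[ℝ] ℝ) s ≤ p s := by
    intro s
    have h1 : (LinearPMap.mk S g : X →ₗ.[ℝ] ℝ) s = ℓ (σ s) := rfl
    rw [h1]
    calc ℓ (σ s) ≤ p (γ (σ s)) := hℓp (σ s)
      _ = p s := by rw [hσ]
  obtain ⟨z₀, hz₀eq, hz₀le⟩ :=
    exists_extension_of_le_sublinear (LinearPMap.mk S g) p hphom hpadd hgle
  have hz₀cont : ∀ x : X, ‖z₀ x‖ ≤ K * ‖x‖ := by
    intro x
    rw [Real.norm_eq_abs, abs_le]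
    constructor
    · have h1 : z₀ (-x) ≤ p (-x) := hz₀le (-x)
      have h2 : |p (-x)| ≤ K * ‖-x‖ := hKp (-x)
      rw [norm_neg] at h2
      have h3 : z₀ (-x) = -z₀ x := map_neg z₀ x
      have h4 := (abs_le.1 h2).2
      rw [h3] at h1
      linarith
    · have h1 : z₀ x ≤ p x := hz₀le x
      have h2 := (abs_le.1 (hKp x)).2
      linarith
  set z : X →L[ℝ] ℝ := LinearMap.mkContinuous z₀ K hz₀cont with hz_def
  have hzap : ∀ x : X, z x = z₀ x := fun x => rfl
  refine ⟨z, ?_, ?_⟩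
  · intro x
    rw [hzap]
    exact hz₀le x
  · intro v
    have hv : γ v ∈ S := hmemS v
    have h1 : z (γ v) = z₀ (γ v) := rfl
    have h2 : z₀ (γ v) = g ⟨γ v, hv⟩ := hz₀eq ⟨γ v, hv⟩
    have h3 : g ⟨γ v, hv⟩ = ℓ (σ ⟨γ v, hv⟩) := rfl
    have h4 : γ (σ ⟨γ v, hv⟩) = γ v := hσ ⟨γ v, hv⟩
    have h5 : ℓ (σ ⟨γ v, hv⟩) = ℓ v := key _ _ h4
    have h6 := hℓ v
    rw [h1, h2, h3, h5, h6]
    ring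

/-- Uniqueness for the inclusion problem. -/
lemma incl_unique (A : V → V →L[ℝ] ℝ)
    (m_A : ℝ)
    (hA_mono : ∀ u v : V, m_A * ‖u - v‖ ^ 2 ≤ (A u - A v) (u - v))
    (J : X → X → ℝ)
    (m_α m_L : ℝ)
    (hJ_mono : ∀ w₁ w₂ v₁ v₂ : X,
      clarkeDeriv (J w₁) v₁ (v₂ - v₁) + clarkeDeriv (J w₂) v₂ (v₁ - v₂)
        ≤ m_α * ‖v₁ - v₂‖ ^ 2 + m_L * ‖w₁ - w₂‖ * ‖v₁ - v₂‖)
    (γ : V →L[ℝ] X) (f : V →L[ℝ] ℝ)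
    (hm_α : 0 ≤ m_α) (hm_L : 0 ≤ m_L)
    (hs : (m_α + m_L) * ‖γ‖ ^ 2 < m_A) (u₁ u₂ : V)
    (h₁ : ∃ z ∈ clarkeSubdiff (J (γ u₁)) (γ u₁), ∀ v : V, A u₁ v + z (γ v) = f v)
    (h₂ : ∃ z ∈ clarkeSubdiff (J (γ u₂)) (γ u₂), ∀ v : V, A u₂ v + z (γ v) = f v) :
    u₁ = u₂ := by
  obtain ⟨z₁, hz₁, he₁⟩ := h₁
  obtain ⟨z₂, hz₂, he₂⟩ := h₂
  have ha := he₁ (u₁ - u₂)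
  have hb := he₂ (u₁ - u₂)
  have hA := hA_mono u₁ u₂
  have hz₁le : z₁ (γ u₂ - γ u₁) ≤ clarkeDeriv (J (γ u₁)) (γ u₁) (γ u₂ - γ u₁) :=
    hz₁ (γ u₂ - γ u₁)
  have hz₂le : z₂ (γ u₁ - γ u₂) ≤ clarkeDeriv (J (γ u₂)) (γ u₂) (γ u₁ - γ u₂) :=
    hz₂ (γ u₁ - γ u₂)
  have hJ := hJ_mono (γ u₁) (γ u₂) (γ u₁) (γ u₂)
  have e0 : (A u₁ - A u₂) (u₁ - u₂) = A u₁ (u₁ - u₂) - A u₂ (u₁ - u₂) := rfl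
  have e1 : z₁ (γ (u₁ - u₂)) = -(z₁ (γ u₂ - γ u₁)) := by
    simp only [map_sub]; ring
  have e2 : z₂ (γ (u₁ - u₂)) = z₂ (γ u₁ - γ u₂) := by
    simp only [map_sub]
  have hγ1 : ‖γ u₁ - γ u₂‖ ≤ ‖γ‖ * ‖u₁ - u₂‖ := by
    rw [← map_sub]; exact γ.le_opNorm _
  have hγ0 : (0:ℝ) ≤ ‖γ u₁ - γ u₂‖ := norm_nonneg _
  have hD0 : (0:ℝ) ≤ ‖u₁ - u₂‖ := norm_nonneg _
  have hγn : (0:ℝ) ≤ ‖γ‖ := norm_nonneg _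
  have hGsq : ‖γ u₁ - γ u₂‖ ^ 2 ≤ (‖γ‖ * ‖u₁ - u₂‖) ^ 2 := pow_le_pow_left₀ hγ0 hγ1 2
  have h5 : m_α * ‖γ u₁ - γ u₂‖ ^ 2 ≤ m_α * (‖γ‖ * ‖u₁ - u₂‖) ^ 2 :=
    mul_le_mul_of_nonneg_left hGsq hm_α
  have h6 : m_L * ‖γ u₁ - γ u₂‖ * ‖γ u₁ - γ u₂‖ ≤ m_L * (‖γ‖ * ‖u₁ - u₂‖) ^ 2 := by
    nlinarith [hGsq]
  have hsq : ‖u₁ - u₂‖ ^ 2 * (m_A - (m_α + m_L) * ‖γ‖ ^ 2) ≤ 0 := by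
    nlinarith [ha, hb, hA, hz₁le, hz₂le, hJ, e0, e1, e2, h5, h6]
  have hpos : 0 < m_A - (m_α + m_L) * ‖γ‖ ^ 2 := by linarith
  have hle : ‖u₁ - u₂‖ ^ 2 ≤ 0 := by nlinarith [hsq, hpos]
  have hzero : ‖u₁ - u₂‖ ^ 2 = 0 := le_antisymm hle (sq_nonneg _)
  have : ‖u₁ - u₂‖ = 0 := by
    have := sq_eq_zero_iff.mp hzero
    exact this
  rw [norm_eq_zero, sub_eq_zero] at this
  exact this

end Problem

end CS9

theorem stmt9
    {V : Type*} [NormedAddCommGroup V] [NormedSpace ℝ V] [CompleteSpace V]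
    {X : Type*} [NormedAddCommGroup X] [NormedSpace ℝ X] [CompleteSpace X]
    (hV_refl : Function.Surjective (NormedSpace.inclusionInDoubleDual ℝ V))
    (A : V → V →L[ℝ] ℝ) (F_A : V → ℝ) (L_A : ℝ) (hL_A : 0 < L_A)
    (hA_lip : ∀ u v : V, ‖A u - A v‖ ≤ L_A * ‖u - v‖)
    (hA_pot : ∀ u v : V, HasLineDerivAt ℝ F_A (A u v) u v)
    (m_A : ℝ) (hm_A : 0 < m_A)
    (hA_mono : ∀ u v : V, m_A * ‖u - v‖ ^ 2 ≤ (A u - A v) (u - v))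
    (J : X → X → ℝ)
    (hJ_lip : ∀ w : X, LocallyLipschitz (J w))
    (c₀ c₁ c₂ : ℝ) (hc₀ : 0 ≤ c₀) (hc₁ : 0 ≤ c₁) (hc₂ : 0 ≤ c₂)
    (hJ_bdd : ∀ w v : X, ∀ ξ ∈ clarkeSubdiff (J w) v, ‖ξ‖ ≤ c₀ + c₁ * ‖v‖ + c₂ * ‖w‖)
    (m_α m_L : ℝ) (hm_α : 0 ≤ m_α) (hm_L : 0 ≤ m_L)
    (hJ_mono : ∀ w₁ w₂ v₁ v₂ : X,
      clarkeDeriv (J w₁) v₁ (v₂ - v₁) + clarkeDeriv (J w₂) v₂ (v₁ - v₂)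
        ≤ m_α * ‖v₁ - v₂‖ ^ 2 + m_L * ‖w₁ - w₂‖ * ‖v₁ - v₂‖)
    (γ : V →L[ℝ] X) (f : V →L[ℝ] ℝ)
    (hs : (m_α + m_L) * ‖γ‖ ^ 2 < m_A)
 :
    (∃! u : V, (0 : V →L[ℝ] ℝ) ∈ clarkeSubdiff (fun v : V => F_A v - f v + J (γ u) (γ v)) u) ∧
    (∃! u : V, ∃ z ∈ clarkeSubdiff (J (γ u)) (γ u), ∀ v : V, A u v + z (γ v) = f v) ∧
    (∀ u : V,
      ((0 : V →L[ℝ] ℝ) ∈ clarkeSubdiff (fun v : V => F_A v - f v + J (γ u) (γ v)) u ↔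
        ∃ z ∈ clarkeSubdiff (J (γ u)) (γ u), ∀ v : V, A u v + z (γ v) = f v)) := by
  classical
  haveI : Nonempty V := ⟨0⟩
  -- positivity of the strong convexity constant
  have hγn : (0:ℝ) ≤ ‖γ‖ := norm_nonneg _
  have hc : 0 < m_A - m_α * ‖γ‖ ^ 2 := by nlinarith [sq_nonneg ‖γ‖]
  -- existence of critical points for each frozen argument
  have E : ∀ ω : X, ∃ u : V, ∀ d : V,
      0 ≤ clarkeDeriv (fun v => F_A v - f v + J ω (γ v)) u d :=
    CS9.exists_crit A F_A L_A J γ f m_A m_α m_L hL_A hA_lip hA_pot hA_mono hJ_lip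
      hm_α hm_L hJ_mono hc
  set Λ : V → V := fun w => (E (γ w)).choose with hΛ_def
  have hΛ : ∀ w : V, ∀ d : V,
      0 ≤ clarkeDeriv (fun v => F_A v - f v + J (γ w) (γ v)) (Λ w) d :=
    fun w => (E (γ w)).choose_spec
  -- contraction estimate
  have contraction : ∀ w₁ w₂ : V,
      (m_A - m_α * ‖γ‖ ^ 2) * ‖Λ w₁ - Λ w₂‖ ≤ m_L * ‖γ‖ ^ 2 * ‖w₁ - w₂‖ := by
    intro w₁ w₂
    have h1 := hΛ w₁ (Λ w₂ - Λ w₁)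
    have h2 := hΛ w₂ (Λ w₁ - Λ w₂)
    have hm := CS9.cd_mono A F_A L_A hL_A hA_lip hA_pot m_A hA_mono J hJ_lip m_α m_L hm_α hm_L
      hJ_mono γ f (γ w₁) (γ w₂) (Λ w₁) (Λ w₂)
    have hγ2 : ‖γ w₁ - γ w₂‖ ≤ ‖γ‖ * ‖w₁ - w₂‖ := by
      rw [← map_sub]; exact γ.le_opNorm _
    have hD0 : (0:ℝ) ≤ ‖Λ w₁ - Λ w₂‖ := norm_nonneg _
    have hw0 : (0:ℝ) ≤ ‖w₁ - w₂‖ := norm_nonneg _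
    have hsq : (m_A - m_α * ‖γ‖ ^ 2) * ‖Λ w₁ - Λ w₂‖ ^ 2
        ≤ m_L * ‖γ‖ ^ 2 * ‖w₁ - w₂‖ * ‖Λ w₁ - Λ w₂‖ := by
      nlinarith [mul_le_mul_of_nonneg_left hγ2 (mul_nonneg hm_L hγn)]
    rcases eq_or_lt_of_le hD0 with hD | hD
    · rw [← hD, mul_zero]
      positivity
    · have h7 : ((m_A - m_α * ‖γ‖ ^ 2) * ‖Λ w₁ - Λ w₂‖) * ‖Λ w₁ - Λ w₂‖
          ≤ (m_L * ‖γ‖ ^ 2 * ‖w₁ - w₂‖) * ‖Λ w₁ - Λ w₂‖ := by nlinarith [hsq]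
      exact le_of_mul_le_mul_right h7 hD
  -- Banach fixed point
  set k : ℝ := m_L * ‖γ‖ ^ 2 / (m_A - m_α * ‖γ‖ ^ 2) with hk_def
  have hk0 : 0 ≤ k := div_nonneg (by positivity) hc.le
  have hk1 : k < 1 := by
    rw [div_lt_one hc]
    nlinarith [sq_nonneg ‖γ‖]
  have hΛlip : LipschitzWith ⟨k, hk0⟩ Λ := by
    refine LipschitzWith.of_dist_le_mul ?_
    intro w₁ w₂
    rw [dist_eq_norm, dist_eq_norm]
    show ‖Λ w₁ - Λ w₂‖ ≤ k * ‖w₁ - w₂‖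
    rw [hk_def, div_mul_eq_mul_div, le_div_iff₀ hc]
    have := contraction w₁ w₂
    linarith
  have hcontr : ContractingWith ⟨k, hk0⟩ Λ := by
    refine ⟨?_, hΛlip⟩
    exact hk1
  set u0 : V := ContractingWith.fixedPoint Λ hcontr with hu0_def
  have hfix : Λ u0 = u0 := hcontr.fixedPoint_isFixedPt
  have hcrit0 : ∀ d : V, 0 ≤ clarkeDeriv (fun v => F_A v - f v + J (γ u0) (γ v)) u0 d := by
    have := hΛ u0
    rwa [hfix] at this
  -- bridging lemmas
  have opt_iff_crit : ∀ u : V,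
      ((0 : V →L[ℝ] ℝ) ∈ clarkeSubdiff (fun v : V => F_A v - f v + J (γ u) (γ v)) u ↔
        ∀ d : V, 0 ≤ clarkeDeriv (fun v => F_A v - f v + J (γ u) (γ v)) u d) := by
    intro u
    constructor
    · intro h d
      have := h d
      rwa [ContinuousLinearMap.zero_apply] at this
    · intro h d
      rw [ContinuousLinearMap.zero_apply]
      exact h d
  have crit_to_incl : ∀ u : V,
      (∀ d : V, 0 ≤ clarkeDeriv (fun v => F_A v - f v + J (γ u) (γ v)) u d) →
      ∃ z ∈ clarkeSubdiff (J (γ u)) (γ u), ∀ v : V, A u v + z (γ v) = f v := by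
    intro u hcrit
    refine CS9.exists_z A J hJ_lip γ f u ?_
    intro v
    have h1 := hcrit v
    have h2 := CS9.cd_upper A F_A L_A hL_A hA_lip hA_pot J hJ_lip γ f (γ u) u v
    linarith
  have hincl0 : ∃ z ∈ clarkeSubdiff (J (γ u0)) (γ u0), ∀ v : V, A u0 v + z (γ v) = f v :=
    crit_to_incl u0 hcrit0
  have hopt0 : (0 : V →L[ℝ] ℝ) ∈ clarkeSubdiff (fun v : V => F_A v - f v + J (γ u0) (γ v)) u0 :=
    (opt_iff_crit u0).2 hcrit0
  have huniq : ∀ u : V,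
      (∃ z ∈ clarkeSubdiff (J (γ u)) (γ u), ∀ v : V, A u v + z (γ v) = f v) → u = u0 :=
    fun u h => CS9.incl_unique A m_A hA_mono J m_α m_L hJ_mono γ f hm_α hm_L hs u u0 h hincl0
  refine ⟨⟨u0, hopt0, ?_⟩, ⟨u0, hincl0, ?_⟩, ?_⟩
  · intro y hy
    exact huniq y (crit_to_incl y ((opt_iff_crit y).1 hy))
  · intro y hy
    exact huniq y hy
  · intro u
    constructor
    · intro h
      exact crit_to_incl u ((opt_iff_crit u).1 h)
    · intro h
      have := huniq u h
      rw [this]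
      exact hopt0
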